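/- arXiv:2105.03849 — 11 statements merged into one kernel-verified Lean document; each statement's English description precedes it below -/
import Mathlib

section
/- (Critical point CP₅.) Assume λ_V > 0 and let A be a real number with 0 ≤ A ≤ 2 satisfying the quadratic equation (D−1)(3−w_m)A² − 2[(D−1)(1+w_m) + (D−2)λ_V²]A + 2(D−2)(1+w_m)λ_V² = 0 (whose two roots are the quantities A₊ and A₋ of the paper). Then the point (x_c, y_c, 0) with x_c = (A/λ_V)·√((D−1)/(D−2)) and y_c = (1/λ_V)·√((D−1)(2−A)A/(2(D−2))) is a critical point of the cosmological autonomous system, i.e. G(x_c, y_c, 0) = 0. -/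
/-- The cosmological vector field `G = (G₁, G₂, G₃)` on `ℝ³ = ℝ × ℝ × ℝ`,
with `k = √((D−2)/(D−1))`. -/
noncomputable def G (D : ℕ) (wm lV lW f1 f2 : ℝ) (p : ℝ × ℝ × ℝ) : ℝ × ℝ × ℝ :=
  let k := Real.sqrt (((D : ℝ) - 2) / ((D : ℝ) - 1))
  ((1 - wm) * p.1 ^ 3 - (1 + wm) * p.1 * p.2.1 ^ 2 - (f2 + wm * f1) * p.1 * p.2.2 ^ 2
      - (1 - wm) * p.1 + 2 * k * (lV * p.2.1 ^ 2 + lW * f1 * p.2.2 ^ 2),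
   (1 + wm) * p.2.1 + (1 - wm) * p.1 ^ 2 * p.2.1 - (1 + wm) * p.2.1 ^ 3
      - (f2 + wm * f1) * p.2.1 * p.2.2 ^ 2 - k * lV * p.1 * p.2.1,
   (1 + wm) * p.2.2 + (1 - wm) * p.1 ^ 2 * p.2.2 - (1 + wm) * p.2.1 ^ 2 * p.2.2
      - (f2 + wm * f1) * p.2.2 ^ 3 - k * lW * p.1 * p.2.2)

/-- CP₅ is a critical point of the system. -/
theorem CP5_critical (D : ℕ) (hD : 4 ≤ D) (wm lV lW f1 f2 : ℝ)
    (hlV : 0 < lV) (A : ℝ) (hA0 : 0 ≤ A) (hA2 : A ≤ 2)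
    (hquad : ((D : ℝ) - 1) * (3 - wm) * A ^ 2
        - 2 * (((D : ℝ) - 1) * (1 + wm) + ((D : ℝ) - 2) * lV ^ 2) * A
        + 2 * ((D : ℝ) - 2) * (1 + wm) * lV ^ 2 = 0) :
    G D wm lV lW f1 f2
      ((A / lV) * Real.sqrt (((D : ℝ) - 1) / ((D : ℝ) - 2)),
       (1 / lV) * Real.sqrt (((D : ℝ) - 1) * (2 - A) * A / (2 * ((D : ℝ) - 2))),
       0) = 0 := by
  have hD' : (4:ℝ) ≤ (D:ℝ) := by exact_mod_cast hD
  have hd2 : (0:ℝ) < (D:ℝ) - 2 := by linarith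
  have hd1 : (0:ℝ) < (D:ℝ) - 1 := by linarith
  have hlV' : lV ≠ 0 := ne_of_gt hlV
  have hk2 : Real.sqrt (((D:ℝ)-2)/((D:ℝ)-1)) ^ 2 = ((D:ℝ)-2)/((D:ℝ)-1) :=
    Real.sq_sqrt (by positivity)
  have hs2 : Real.sqrt (((D:ℝ)-1)/((D:ℝ)-2)) ^ 2 = ((D:ℝ)-1)/((D:ℝ)-2) :=
    Real.sq_sqrt (by positivity)
  have hks : Real.sqrt (((D:ℝ)-2)/((D:ℝ)-1)) * Real.sqrt (((D:ℝ)-1)/((D:ℝ)-2)) = 1 := by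
    rw [← Real.sqrt_mul (by positivity),
      show ((D:ℝ)-2)/((D:ℝ)-1) * (((D:ℝ)-1)/((D:ℝ)-2)) = 1 by field_simp]
    exact Real.sqrt_one
  have hA2' : (0:ℝ) ≤ 2 - A := by linarith
  have hy2 : Real.sqrt (((D:ℝ)-1)*(2-A)*A/(2*((D:ℝ)-2))) ^ 2
      = ((D:ℝ)-1)*(2-A)*A/(2*((D:ℝ)-2)) :=
    Real.sq_sqrt (by positivity)
  set k := Real.sqrt (((D:ℝ)-2)/((D:ℝ)-1)) with hk
  set s := Real.sqrt (((D:ℝ)-1)/((D:ℝ)-2)) with hs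
  set w := Real.sqrt (((D:ℝ)-1)*(2-A)*A/(2*((D:ℝ)-2))) with hw
  have hd2' : ((D:ℝ)-2) ≠ 0 := ne_of_gt hd2
  have hs2' : (((D:ℝ)-2)) * s^2 = ((D:ℝ)-1) := by
    rw [hs2]; field_simp
  have hy2' : 2*(((D:ℝ)-2)) * w^2 = ((D:ℝ)-1)*(2-A)*A := by
    rw [hy2]; field_simp
  simp only [G]
  refine Prod.ext ?_ (Prod.ext ?_ ?_)
  · show (1 - wm) * ((A/lV)*s) ^ 3 - (1 + wm) * ((A/lV)*s) * ((1/lV)*w) ^ 2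
      - (f2 + wm * f1) * ((A/lV)*s) * (0:ℝ) ^ 2 - (1 - wm) * ((A/lV)*s)
      + 2 * k * (lV * ((1/lV)*w) ^ 2 + lW * f1 * (0:ℝ) ^ 2) = 0
    have h2d : (2*((D:ℝ)-2)) ≠ 0 := by positivity
    field_simp
    refine mul_left_cancel₀ h2d ?_
    linear_combination
      (2*(1-wm)*A^3*s - 2*(2-A)*A*k*lV^2) * hs2'
      + (-(1+wm)*A*s + 2*k*lV^2) * hy2'
      + (2*((D:ℝ)-2)*(-A^2*s*lV^2 + 2*A*s*lV^2)) * hks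
      + (A*s) * hquad
  · show (1 + wm) * ((1/lV)*w) + (1 - wm) * ((A/lV)*s) ^ 2 * ((1/lV)*w)
      - (1 + wm) * ((1/lV)*w) ^ 3 - (f2 + wm * f1) * ((1/lV)*w) * (0:ℝ) ^ 2
      - k * lV * ((A/lV)*s) * ((1/lV)*w) = 0
    have h2d : (2*((D:ℝ)-2)) ≠ 0 := by positivity
    field_simp
    refine mul_left_cancel₀ h2d ?_
    linear_combination
      (2*(1-wm)*A^2*w) * hs2'
      + (-(1+wm)*w) * hy2'
      + (-2*((D:ℝ)-2)*A*w*lV^2) * hks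
      + (w) * hquad
  · show (1 + wm) * (0:ℝ) + (1 - wm) * ((A/lV)*s) ^ 2 * (0:ℝ)
      - (1 + wm) * ((1/lV)*w) ^ 2 * (0:ℝ) - (f2 + wm * f1) * (0:ℝ) ^ 3
      - k * lW * ((A/lV)*s) * (0:ℝ) = 0
    ring
end

section
/- (Critical point CP₆.) Assume 0 ≤ λ_V < λ_W and f₁ = f₂ < 0. Then the point (0, y_c, z_c) with y_c = √(λ_W/(λ_W − λ_V)) and z_c = √(λ_V/(|f₁|(λ_W − λ_V))) is a critical point of the cosmological autonomous system, i.e. G(0, y_c, z_c) = 0. -/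
/-- CP₆ is a critical point when `0 ≤ λ_V < λ_W` and `f₁ = f₂ < 0`. -/
theorem CP6_critical (D : ℕ) (hD : 4 ≤ D) (wm lV lW f1 f2 : ℝ)
    (hlV : 0 ≤ lV) (hlt : lV < lW) (hf : f1 = f2) (hf1 : f1 < 0) :
    G D wm lV lW f1 f2
      (0, Real.sqrt (lW / (lW - lV)), Real.sqrt (lV / (|f1| * (lW - lV)))) = 0 := by
  have ha : 0 < lW - lV := by linarith
  have hlW : 0 < lW := lt_of_le_of_lt hlV hlt
  have habs : |f1| = -f1 := abs_of_neg hf1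
  have hy2 : (Real.sqrt (lW / (lW - lV)))^2 = lW / (lW - lV) :=
    Real.sq_sqrt (by positivity)
  have hz2 : (Real.sqrt (lV / (|f1| * (lW - lV))))^2 = lV / (-f1 * (lW - lV)) := by
    rw [Real.sq_sqrt (by positivity), habs]
  set y := Real.sqrt (lW / (lW - lV))
  set z := Real.sqrt (lV / (|f1| * (lW - lV)))
  have hy3 : y ^ 3 = y * (lW / (lW - lV)) := by rw [pow_succ' y 2, hy2]
  have hz3 : z ^ 3 = z * (lV / (-f1 * (lW - lV))) := by rw [pow_succ' z 2, hz2]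
  simp only [G, Prod.mk_eq_zero]
  refine ⟨?_, ?_, ?_⟩ <;>
  · rw [← hf]
    simp only [hy3, hz3, hy2, hz2]
    field_simp [hy2, hz2, hy3, hz3, ha.ne', hf1.ne]
    ring
end

section
/- (Critical point family CP₇.) Assume λ_V = λ_W = 0 and f₁ = f₂ > 0. Then for every real number c with f₁ c² ≤ 1, the point (0, √(1 − f₁ c²), c) is a critical point of the cosmological autonomous system, i.e. G(0, √(1 − f₁ c²), c) = 0. -/
/-- CP₇ family: for `λ_V = λ_W = 0`, `f₁ = f₂ > 0` and `f₁ c² ≤ 1`,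
every point `(0, √(1 − f₁ c²), c)` is a critical point. -/
theorem CP7_critical (D : ℕ) (hD : 4 ≤ D) (wm lV lW f1 f2 : ℝ)
    (hlV : lV = 0) (hlW : lW = 0) (hf : f1 = f2) (hf1 : 0 < f1)
    (c : ℝ) (hc : f1 * c ^ 2 ≤ 1) :
    G D wm lV lW f1 f2 (0, Real.sqrt (1 - f1 * c ^ 2), c) = 0 := by
  have hs : Real.sqrt (1 - f1 * c ^ 2) ^ 2 = 1 - f1 * c ^ 2 :=
    Real.sq_sqrt (by linarith)
  simp only [G, hlV, hlW, ← hf, Prod.mk_eq_zero]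
  refine ⟨by ring, ?_, ?_⟩
  · linear_combination (-(1 + wm) * Real.sqrt (1 - f1 * c ^ 2)) * hs
  · linear_combination (-(1 + wm) * c) * hs
end

section
/- (Critical point CP₈.) Assume λ_W > 0, f₁ = f₂ > 0, and let B be a real number with 0 ≤ B ≤ 2 satisfying the quadratic equation (D−1)(3−w_m)B² − 2[(D−1)(1+w_m) + (D−2)λ_W²]B + 2(D−2)(1+w_m)λ_W² = 0 (whose two roots are the quantities B₊ and B₋ of the paper). Then the point (x_c, 0, z_c) with x_c = (B/λ_W)·√((D−1)/(D−2)) and z_c = (1/λ_W)·√((D−1)(2−B)B/(2(D−2)f₁)) is a critical point of the cosmological autonomous system, i.e. G(x_c, 0, z_c) = 0. -/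
private lemma alg1 (d1 d2 S K Z B w l f : ℝ) (hd1 : d1 ≠ 0) (hd2 : d2 ≠ 0)
    (h1 : d2 * S ^ 2 = d1) (h2 : K * S = 1)
    (h3 : 2 * d2 * f * Z ^ 2 = d1 * (2 - B) * B)
    (hq : d1 * (3 - w) * B ^ 2 - 2 * (d1 * (1 + w) + d2 * l ^ 2) * B
        + 2 * d2 * (1 + w) * l ^ 2 = 0) :
    (1 - w) * B ^ 3 * S ^ 3 - (1 + w) * f * B * S * Z ^ 2 - (1 - w) * B * S * l ^ 2
      + 2 * K * f * Z ^ 2 * l ^ 2 = 0 := by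
  have h : (2 * d2 * d1) *
      ((1 - w) * B ^ 3 * S ^ 3 - (1 + w) * f * B * S * Z ^ 2 - (1 - w) * B * S * l ^ 2
        + 2 * K * f * Z ^ 2 * l ^ 2) = 0 := by
    linear_combination (S * d1 * B) * hq
      + (2 * d1 * K * l ^ 2 - d1 * S * B - d1 * S * B * w) * h3
      + (-4 * d1 * K * B * l ^ 2 + 2 * d1 * K * B ^ 2 * l ^ 2 + 2 * d1 * S * B ^ 3
          - 2 * d1 * S * B ^ 3 * w) * h1
      + (4 * d1 * d2 * S * B * l ^ 2 - 2 * d1 * d2 * S * B ^ 2 * l ^ 2) * h2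
  have hne : (2 * d2 * d1 : ℝ) ≠ 0 := by
    exact mul_ne_zero (mul_ne_zero two_ne_zero hd2) hd1
  exact (mul_eq_zero.mp h).resolve_left hne

private lemma alg3 (d1 d2 S K Z B w l f : ℝ) (hd2 : d2 ≠ 0)
    (h1 : d2 * S ^ 2 = d1) (h2 : K * S = 1)
    (h3 : 2 * d2 * f * Z ^ 2 = d1 * (2 - B) * B)
    (hq : d1 * (3 - w) * B ^ 2 - 2 * (d1 * (1 + w) + d2 * l ^ 2) * B
        + 2 * d2 * (1 + w) * l ^ 2 = 0) :
    (1 + w) * Z * l ^ 2 + (1 - w) * B ^ 2 * S ^ 2 * Z - f * (1 + w) * Z ^ 3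
      - K * B * S * Z * l ^ 2 = 0 := by
  have h : (2 * d2) *
      ((1 + w) * Z * l ^ 2 + (1 - w) * B ^ 2 * S ^ 2 * Z - f * (1 + w) * Z ^ 3
        - K * B * S * Z * l ^ 2) = 0 := by
    linear_combination Z * hq + (-Z - Z * w) * h3
      + (2 * Z * B ^ 2 - 2 * Z * B ^ 2 * w) * h1 + (-2 * d2 * Z * B * l ^ 2) * h2
  have hne : (2 * d2 : ℝ) ≠ 0 := mul_ne_zero two_ne_zero hd2
  exact (mul_eq_zero.mp h).resolve_left hne

/-- CP₈ is a critical point of the system. -/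
theorem CP8_critical (D : ℕ) (hD : 4 ≤ D) (wm lV lW f1 f2 : ℝ)
    (hlW : 0 < lW) (hf : f1 = f2) (hf1 : 0 < f1)
    (B : ℝ) (hB0 : 0 ≤ B) (hB2 : B ≤ 2)
    (hquad : ((D : ℝ) - 1) * (3 - wm) * B ^ 2
        - 2 * (((D : ℝ) - 1) * (1 + wm) + ((D : ℝ) - 2) * lW ^ 2) * B
        + 2 * ((D : ℝ) - 2) * (1 + wm) * lW ^ 2 = 0) :
    G D wm lV lW f1 f2
      ((B / lW) * Real.sqrt (((D : ℝ) - 1) / ((D : ℝ) - 2)),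
       0,
       (1 / lW) * Real.sqrt (((D : ℝ) - 1) * (2 - B) * B / (2 * ((D : ℝ) - 2) * f1))) = 0 := by
  subst hf
  have hD4 : (4 : ℝ) ≤ (D : ℝ) := by exact_mod_cast hD
  set d1 : ℝ := (D : ℝ) - 1 with hd1def
  set d2 : ℝ := (D : ℝ) - 2 with hd2def
  have hd1 : 0 < d1 := by simp only [hd1def]; linarith
  have hd2 : 0 < d2 := by simp only [hd2def]; linarith
  have hlW' : lW ≠ 0 := ne_of_gt hlW
  set S : ℝ := Real.sqrt (d1 / d2) with hSdef
  set K : ℝ := Real.sqrt (d2 / d1) with hKdef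
  set Z : ℝ := Real.sqrt (d1 * (2 - B) * B / (2 * d2 * f1)) with hZdef
  have h1 : d2 * S ^ 2 = d1 := by
    rw [hSdef, Real.sq_sqrt (div_nonneg hd1.le hd2.le)]
    field_simp
  have h2 : K * S = 1 := by
    rw [hKdef, hSdef, ← Real.sqrt_mul (div_nonneg hd2.le hd1.le)]
    rw [show d2 / d1 * (d1 / d2) = 1 by field_simp]
    exact Real.sqrt_one
  have h3 : 2 * d2 * f1 * Z ^ 2 = d1 * (2 - B) * B := by
    rw [hZdef, Real.sq_sqrt]
    · field_simp
    · apply div_nonneg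
      · exact mul_nonneg (mul_nonneg hd1.le (by linarith)) hB0
      · positivity
  have e1 := alg1 d1 d2 S K Z B wm lW f1 hd1.ne' hd2.ne' h1 h2 h3 hquad
  have e3 := alg3 d1 d2 S K Z B wm lW f1 hd2.ne' h1 h2 h3 hquad
  show ((1 - wm) * (B / lW * S) ^ 3 - (1 + wm) * (B / lW * S) * (0:ℝ) ^ 2
      - (f1 + wm * f1) * (B / lW * S) * (1 / lW * Z) ^ 2
      - (1 - wm) * (B / lW * S) + 2 * K * (lV * (0:ℝ) ^ 2 + lW * f1 * (1 / lW * Z) ^ 2),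
    (1 + wm) * (0:ℝ) + (1 - wm) * (B / lW * S) ^ 2 * 0 - (1 + wm) * (0:ℝ) ^ 3
      - (f1 + wm * f1) * 0 * (1 / lW * Z) ^ 2 - K * lV * (B / lW * S) * 0,
    (1 + wm) * (1 / lW * Z) + (1 - wm) * (B / lW * S) ^ 2 * (1 / lW * Z)
      - (1 + wm) * (0:ℝ) ^ 2 * (1 / lW * Z) - (f1 + wm * f1) * (1 / lW * Z) ^ 3
      - K * lW * (B / lW * S) * (1 / lW * Z)) = (0, 0, 0)
  refine Prod.ext ?_ (Prod.ext ?_ ?_)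
  · show _ = (0:ℝ)
    linear_combination (norm := (field_simp; ring1)) e1 / lW ^ 3
  · show _ = (0:ℝ)
    ring
  · show _ = (0:ℝ)
    linear_combination (norm := (field_simp; ring1)) e3 / lW ^ 3
end

section
/- (Linearization at CP₂ and CP₃.) The total derivative of G at the point (ε, 0, 0), for ε = 1 or ε = −1, is the diagonal linear map on ℝ³ with diagonal entries 2(1−w_m), 2 − ε λ_V √((D−2)/(D−1)), and 2 − ε λ_W √((D−2)/(D−1)); in particular its eigenvalues are exactly these three numbers. -/
/-- A power-free version of `G` with a generic constant `k`. -/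
def Gaux (wm lV lW f1 f2 k : ℝ) (p : ℝ × ℝ × ℝ) : ℝ × ℝ × ℝ :=
  ((1 - wm) * p.1 * p.1 * p.1 - (1 + wm) * p.1 * p.2.1 * p.2.1
      - (f2 + wm * f1) * p.1 * p.2.2 * p.2.2
      - (1 - wm) * p.1 + 2 * k * (lV * p.2.1 * p.2.1 + lW * f1 * p.2.2 * p.2.2),
   (1 + wm) * p.2.1 + (1 - wm) * p.1 * p.1 * p.2.1 - (1 + wm) * p.2.1 * p.2.1 * p.2.1
      - (f2 + wm * f1) * p.2.1 * p.2.2 * p.2.2 - k * lV * p.1 * p.2.1,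
   (1 + wm) * p.2.2 + (1 - wm) * p.1 * p.1 * p.2.2 - (1 + wm) * p.2.1 * p.2.1 * p.2.2
      - (f2 + wm * f1) * p.2.2 * p.2.2 * p.2.2 - k * lW * p.1 * p.2.2)

lemma G_eq_Gaux (D : ℕ) (wm lV lW f1 f2 : ℝ) :
    G D wm lV lW f1 f2 = Gaux wm lV lW f1 f2 (Real.sqrt (((D : ℝ) - 2) / ((D : ℝ) - 1))) := by
  funext p
  simp only [G, Gaux, Prod.mk.injEq]
  refine ⟨by ring, by ring, by ring⟩

lemma Gaux_fderiv (wm lV lW f1 f2 k ε : ℝ) (hε2 : ε ^ 2 = 1) :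
    ∀ v : ℝ × ℝ × ℝ,
      fderiv ℝ (Gaux wm lV lW f1 f2 k) (ε, 0, 0) v =
        (2 * (1 - wm) * v.1, (2 - ε * lV * k) * v.2.1, (2 - ε * lW * k) * v.2.2) := by
  have hx : HasFDerivAt (fun p : ℝ × ℝ × ℝ => p.1)
      (ContinuousLinearMap.fst ℝ ℝ (ℝ × ℝ)) (ε, 0, 0) := hasFDerivAt_fst
  have hy : HasFDerivAt (fun p : ℝ × ℝ × ℝ => p.2.1)
      ((ContinuousLinearMap.fst ℝ ℝ ℝ).comp (ContinuousLinearMap.snd ℝ ℝ (ℝ × ℝ))) (ε, 0, 0) :=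
    hasFDerivAt_fst.comp _ hasFDerivAt_snd
  have hz : HasFDerivAt (fun p : ℝ × ℝ × ℝ => p.2.2)
      ((ContinuousLinearMap.snd ℝ ℝ ℝ).comp (ContinuousLinearMap.snd ℝ ℝ (ℝ × ℝ))) (ε, 0, 0) :=
    hasFDerivAt_snd.comp _ hasFDerivAt_snd
  have c1 := ((((((hx.const_mul (1 - wm)).mul hx).mul hx).sub
      (((hx.const_mul (1 + wm)).mul hy).mul hy)).sub
      (((hx.const_mul (f2 + wm * f1)).mul hz).mul hz)).sub
      (hx.const_mul (1 - wm))).add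
      ((((hy.const_mul lV).mul hy).add ((hz.const_mul (lW * f1)).mul hz)).const_mul (2 * k))
  have c2 := (((hy.const_mul (1 + wm)).add
      (((hx.const_mul (1 - wm)).mul hx).mul hy)).sub
      (((hy.const_mul (1 + wm)).mul hy).mul hy)).sub
      (((hy.const_mul (f2 + wm * f1)).mul hz).mul hz) |>.sub
      ((hx.const_mul (k * lV)).mul hy)
  have c3 := (((hz.const_mul (1 + wm)).add
      (((hx.const_mul (1 - wm)).mul hx).mul hz)).sub
      (((hy.const_mul (1 + wm)).mul hy).mul hz)).sub
      (((hz.const_mul (f2 + wm * f1)).mul hz).mul hz) |>.sub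
      ((hx.const_mul (k * lW)).mul hz)
  have hG : HasFDerivAt (Gaux wm lV lW f1 f2 k) _ (ε, 0, 0) := HasFDerivAt.prodMk c1 (HasFDerivAt.prodMk c2 c3)
  intro v
  rw [hG.fderiv]
  simp [Prod.ext_iff, smul_eq_mul]
  refine ⟨?_, ?_, ?_⟩
  · linear_combination 3 * (1 - wm) * v.1 * hε2
  · linear_combination (1 - wm) * v.2.1 * hε2
  · linear_combination (1 - wm) * v.2.2 * hε2

lemma diag_eig (a b c : ℝ) (L : (ℝ × ℝ × ℝ) →ₗ[ℝ] (ℝ × ℝ × ℝ))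
    (hL : ∀ v : ℝ × ℝ × ℝ, L v = (a * v.1, b * v.2.1, c * v.2.2)) (μ : ℝ) :
    Module.End.HasEigenvalue L μ ↔ (μ = a ∨ μ = b ∨ μ = c) := by
  constructor
  · intro h
    obtain ⟨v, hv⟩ := h.exists_hasEigenvector
    have heq : (a * v.1, b * v.2.1, c * v.2.2) = (μ * v.1, μ * v.2.1, μ * v.2.2) := by
      rw [← hL]
      rw [hv.apply_eq_smul]
      simp [Prod.ext_iff, smul_eq_mul]
    rw [Prod.ext_iff, Prod.ext_iff] at heq
    obtain ⟨h1, h2, h3⟩ := heq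
    have hv0 := hv.2
    by_cases e1 : v.1 = 0
    · by_cases e2 : v.2.1 = 0
      · have e3 : v.2.2 ≠ 0 := by
          intro e3
          exact hv0 (by rw [Prod.ext_iff, Prod.ext_iff]; exact ⟨e1, e2, e3⟩)
        exact Or.inr (Or.inr (mul_right_cancel₀ e3 h3.symm))
      · exact Or.inr (Or.inl (mul_right_cancel₀ e2 h2.symm))
    · exact Or.inl (mul_right_cancel₀ e1 h1.symm)
  · intro h
    rcases h with rfl | rfl | rfl
    · refine Module.End.hasEigenvalue_of_hasEigenvector
        (x := ((1 : ℝ), (0 : ℝ), (0 : ℝ)))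
        ⟨Module.End.mem_eigenspace_iff.2 (by simp [hL, Prod.ext_iff]), by simp [Prod.ext_iff]⟩
    · refine Module.End.hasEigenvalue_of_hasEigenvector
        (x := ((0 : ℝ), (1 : ℝ), (0 : ℝ)))
        ⟨Module.End.mem_eigenspace_iff.2 (by simp [hL, Prod.ext_iff]), by simp [Prod.ext_iff]⟩
    · refine Module.End.hasEigenvalue_of_hasEigenvector
        (x := ((0 : ℝ), (0 : ℝ), (1 : ℝ)))
        ⟨Module.End.mem_eigenspace_iff.2 (by simp [hL, Prod.ext_iff]), by simp [Prod.ext_iff]⟩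

/-- the linearization of `G` at CP₂ `(1,0,0)` and CP₃ `(−1,0,0)` is the
diagonal map with entries `2(1−w_m)`, `2 − ε λ_V √((D−2)/(D−1))`, `2 − ε λ_W √((D−2)/(D−1))`,
and its eigenvalues are exactly these three numbers. -/
theorem linearization_CP2_CP3 (D : ℕ) (hD : 4 ≤ D) (wm lV lW f1 f2 : ℝ)
    (ε : ℝ) (hε : ε = 1 ∨ ε = -1) :
    (∀ v : ℝ × ℝ × ℝ,
      fderiv ℝ (G D wm lV lW f1 f2) (ε, 0, 0) v =
        (2 * (1 - wm) * v.1,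
         (2 - ε * lV * Real.sqrt (((D : ℝ) - 2) / ((D : ℝ) - 1))) * v.2.1,
         (2 - ε * lW * Real.sqrt (((D : ℝ) - 2) / ((D : ℝ) - 1))) * v.2.2)) ∧
    ∀ μ : ℝ,
      Module.End.HasEigenvalue
        ((fderiv ℝ (G D wm lV lW f1 f2) (ε, 0, 0)).toLinearMap) μ ↔
      (μ = 2 * (1 - wm) ∨
       μ = 2 - ε * lV * Real.sqrt (((D : ℝ) - 2) / ((D : ℝ) - 1)) ∨
       μ = 2 - ε * lW * Real.sqrt (((D : ℝ) - 2) / ((D : ℝ) - 1))) := by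
  have hε2 : ε ^ 2 = 1 := by rcases hε with rfl | rfl <;> norm_num
  have hmain : ∀ v : ℝ × ℝ × ℝ,
      fderiv ℝ (G D wm lV lW f1 f2) (ε, 0, 0) v =
        (2 * (1 - wm) * v.1,
         (2 - ε * lV * Real.sqrt (((D : ℝ) - 2) / ((D : ℝ) - 1))) * v.2.1,
         (2 - ε * lW * Real.sqrt (((D : ℝ) - 2) / ((D : ℝ) - 1))) * v.2.2) := by
    rw [G_eq_Gaux]
    exact Gaux_fderiv wm lV lW f1 f2 _ ε hε2
  exact ⟨hmain, fun μ => diag_eig _ _ _ _ (fun v => hmain v) μ⟩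
end

section
/- (Linearization at CP₇.) Assume λ_V = λ_W = 0, f₁ = f₂ > 0, and let c ∈ ℝ with f₁ c² ≤ 1. Then the characteristic polynomial of the Jacobian matrix of G at the point (0, √(1 − f₁ c²), c) equals X·(X + 2)·(X + 2(1+w_m)); in particular the eigenvalues of the Jacobian at this critical point are −2, −2(1+w_m), and 0. -/
/-- The standard basis of `ℝ³ = ℝ × ℝ × ℝ`. -/
def stdBasis : Fin 3 → ℝ × ℝ × ℝ := ![(1, 0, 0), (0, 1, 0), (0, 0, 1)]

/-- The components of a vector in `ℝ³ = ℝ × ℝ × ℝ`. -/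
def comp (p : ℝ × ℝ × ℝ) : Fin 3 → ℝ := ![p.1, p.2.1, p.2.2]

/-- The Jacobian matrix of `G` at a point `p`, i.e. the matrix of the total
derivative of `G` at `p` in the standard basis. -/
noncomputable def jacobian (D : ℕ) (wm lV lW f1 f2 : ℝ) (p : ℝ × ℝ × ℝ) :
    Matrix (Fin 3) (Fin 3) ℝ :=
  Matrix.of fun i j => comp (fderiv ℝ (G D wm lV lW f1 f2) p (stdBasis j)) i

section Aux

open ContinuousLinearMap

/-- Projection onto the first coordinate of `ℝ³`, as a continuous linear map. -/
noncomputable def CP7.Px : (ℝ × ℝ × ℝ) →L[ℝ] ℝ := fst ℝ ℝ (ℝ × ℝ)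

/-- Projection onto the second coordinate of `ℝ³`, as a continuous linear map. -/
noncomputable def CP7.Py : (ℝ × ℝ × ℝ) →L[ℝ] ℝ := (fst ℝ ℝ ℝ).comp (snd ℝ ℝ (ℝ × ℝ))

/-- Projection onto the third coordinate of `ℝ³`, as a continuous linear map. -/
noncomputable def CP7.Pz : (ℝ × ℝ × ℝ) →L[ℝ] ℝ := (snd ℝ ℝ ℝ).comp (snd ℝ ℝ (ℝ × ℝ))

open CP7 in
theorem CP7.hasFDerivAt (D : ℕ) (wm f1 s c : ℝ) :
    HasFDerivAt (G D wm 0 0 f1 f1)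
      (((- (1 + wm) * s ^ 2 - (f1 + wm * f1) * c ^ 2 - (1 - wm)) • Px).prod
        (((((1 + wm) - 3 * (1 + wm) * s ^ 2 - (f1 + wm * f1) * c ^ 2) • Py +
            (-2 * (f1 + wm * f1) * (s * c)) • Pz)).prod
          ((-2 * (1 + wm) * (s * c)) • Py +
            ((1 + wm) - (1 + wm) * s ^ 2 - 3 * (f1 + wm * f1) * c ^ 2) • Pz)))
      ((0 : ℝ), s, c) := by
  have hGsimp : G D wm 0 0 f1 f1 = fun p : ℝ × ℝ × ℝ =>
      ((1 - wm) * (p.1 * p.1 * p.1) - ((1 + wm) * p.1) * (p.2.1 * p.2.1)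
          - ((f1 + wm * f1) * p.1) * (p.2.2 * p.2.2) - (1 - wm) * p.1,
       (1 + wm) * p.2.1 + ((1 - wm) * (p.1 * p.1)) * p.2.1 - (1 + wm) * (p.2.1 * p.2.1 * p.2.1)
          - ((f1 + wm * f1) * p.2.1) * (p.2.2 * p.2.2),
       (1 + wm) * p.2.2 + ((1 - wm) * (p.1 * p.1)) * p.2.2 - ((1 + wm) * (p.2.1 * p.2.1)) * p.2.2
          - (f1 + wm * f1) * (p.2.2 * p.2.2 * p.2.2)) := by
    funext p
    simp only [G, zero_mul, mul_zero, add_zero, zero_add, sub_zero, Prod.mk.injEq]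
    refine ⟨by ring, by ring, by ring⟩
  rw [hGsimp]
  have hx : HasFDerivAt (fun p : ℝ × ℝ × ℝ => p.1) Px ((0 : ℝ), s, c) := hasFDerivAt_fst
  have hy : HasFDerivAt (fun p : ℝ × ℝ × ℝ => p.2.1) Py ((0 : ℝ), s, c) :=
    hasFDerivAt_fst.comp _ hasFDerivAt_snd
  have hz : HasFDerivAt (fun p : ℝ × ℝ × ℝ => p.2.2) Pz ((0 : ℝ), s, c) :=
    hasFDerivAt_snd.comp _ hasFDerivAt_snd
  have h1 := (((((hx.mul hx).mul hx).const_mul (1 - wm)).sub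
      ((hx.const_mul (1 + wm)).mul (hy.mul hy))).sub
      ((hx.const_mul (f1 + wm * f1)).mul (hz.mul hz))).sub (hx.const_mul (1 - wm))
  have h2 := (((hy.const_mul (1 + wm)).add (((hx.mul hx).const_mul (1 - wm)).mul hy)).sub
      (((hy.mul hy).mul hy).const_mul (1 + wm))).sub
      ((hy.const_mul (f1 + wm * f1)).mul (hz.mul hz))
  have h3 := (((hz.const_mul (1 + wm)).add (((hx.mul hx).const_mul (1 - wm)).mul hz)).sub
      (((hy.mul hy).const_mul (1 + wm)).mul hz)).sub
      (((hz.mul hz).mul hz).const_mul (f1 + wm * f1))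
  refine (HasFDerivAt.prodMk h1 (HasFDerivAt.prodMk h2 h3)).congr_fderiv ?_
  refine ContinuousLinearMap.ext fun v => ?_
  obtain ⟨v1, v2, v3⟩ := v
  simp [Px, Py, Pz]
  refine ⟨by ring, by ring, by ring⟩

end Aux

open Polynomial in
/-- at the CP₇ point `(0, √(1 − f₁c²), c)` (with `λ_V = λ_W = 0` and
`f₁ = f₂ > 0`), the characteristic polynomial of the Jacobian of `G` is
`X (X + 2) (X + 2(1 + w_m))`; in particular the eigenvalues are `−2`, `−2(1+w_m)`, `0`. -/
theorem charpoly_jacobian_CP7 (D : ℕ) (hD : 4 ≤ D) (wm lV lW f1 f2 : ℝ)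
    (hlV : lV = 0) (hlW : lW = 0) (hf : f1 = f2) (hf1 : 0 < f1)
    (c : ℝ) (hc : f1 * c ^ 2 ≤ 1) :
    (jacobian D wm lV lW f1 f2 (0, Real.sqrt (1 - f1 * c ^ 2), c)).charpoly =
        X * (X + C 2) * (X + C (2 * (1 + wm))) ∧
      ∀ μ : ℝ,
        (jacobian D wm lV lW f1 f2 (0, Real.sqrt (1 - f1 * c ^ 2), c)).charpoly.IsRoot μ ↔
        (μ = -2 ∨ μ = -(2 * (1 + wm)) ∨ μ = 0) := by
  subst hlV hlW hf
  set s := Real.sqrt (1 - f1 * c ^ 2) with hsdef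
  have hs : s ^ 2 = 1 - f1 * c ^ 2 := Real.sq_sqrt (by linarith)
  have hG := CP7.hasFDerivAt D wm f1 s c
  have hjac : jacobian D wm 0 0 f1 f1 (0, s, c) =
      !![-2, 0, 0;
         0, -2 * (1 + wm) * s ^ 2, -2 * f1 * (1 + wm) * (s * c);
         0, -2 * (1 + wm) * (s * c), -2 * f1 * (1 + wm) * c ^ 2] := by
    ext i j
    fin_cases i <;> fin_cases j <;>
      simp [jacobian, _root_.comp, stdBasis, hG.fderiv, CP7.Px, CP7.Py, CP7.Pz] <;>
      first
        | ring1
        | linear_combination (-(1 + wm)) * hs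
        | exact Or.inl (by ring)
        | norm_num [Matrix.vecHead, Matrix.vecTail]
  have hcp : (jacobian D wm 0 0 f1 f1 (0, s, c)).charpoly =
      X * (X + C 2) * (X + C (2 * (1 + wm))) := by
    rw [hjac, Matrix.charpoly, Matrix.det_fin_three]
    simp [Matrix.charmatrix_apply_eq, Matrix.charmatrix_apply_ne, map_mul, map_add, map_sub,
      map_pow, map_one, map_ofNat]
    have hC : (C s : ℝ[X]) ^ 2 = 1 - C f1 * (C c) ^ 2 := by
      rw [← map_pow, hs]; push_cast [map_sub, map_mul, map_pow, map_one]; ring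
    linear_combination (2 * (1 + C wm) * X * (X + 2)) * hC
  refine ⟨hcp, fun μ => ?_⟩
  rw [hcp]
  simp only [IsRoot, eval_mul, eval_add, eval_X, eval_C, mul_eq_zero]
  constructor
  · rintro ((h | h) | h)
    · exact Or.inr (Or.inr h)
    · exact Or.inl (by linarith)
    · exact Or.inr (Or.inl (by linarith))
  · rintro (rfl | rfl | rfl)
    · exact Or.inl (Or.inr (by ring))
    · exact Or.inr (by ring)
    · exact Or.inl (Or.inl rfl)
end

section
/- (Eigenvalue μ₁ at CP₅.) Assume λ_V > 0 and let A be a real number with 0 ≤ A ≤ 2 satisfying (D−1)(3−w_m)A² − 2[(D−1)(1+w_m) + (D−2)λ_V²]A + 2(D−2)(1+w_m)λ_V² = 0. Let p = (x_c, y_c, 0) with x_c = (A/λ_V)·√((D−1)/(D−2)) and y_c = (1/λ_V)·√((D−1)(2−A)A/(2(D−2))). Then the standard basis vector e₃ = (0,0,1) is an eigenvector of the total derivative of G at p with eigenvalue (1 − λ_W/λ_V)·A; that is, DG(p)(e₃) = (1 − λ_W/λ_V)·A · e₃. -/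
private lemma hasDerivAt_cubic (a b c d : ℝ) :
    HasDerivAt (fun t : ℝ => a + b * t + c * t ^ 2 + d * t ^ 3) b 0 := by
  have h := (((hasDerivAt_const (0:ℝ) a).add
      ((hasDerivAt_id (0:ℝ)).const_mul b)).add
      ((hasDerivAt_pow 2 (0:ℝ)).const_mul c)).add
      ((hasDerivAt_pow 3 (0:ℝ)).const_mul d)
  simpa [Pi.add_def] using h

/-- at CP₅, the vector `e₃ = (0,0,1)` is an eigenvector of the total
derivative of `G` with eigenvalue `(1 − λ_W/λ_V) A`. -/
theorem eigenvalue_mu1_CP5 (D : ℕ) (hD : 4 ≤ D) (wm lV lW f1 f2 : ℝ)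
    (hlV : 0 < lV) (A : ℝ) (hA0 : 0 ≤ A) (hA2 : A ≤ 2)
    (hquad : ((D : ℝ) - 1) * (3 - wm) * A ^ 2
        - 2 * (((D : ℝ) - 1) * (1 + wm) + ((D : ℝ) - 2) * lV ^ 2) * A
        + 2 * ((D : ℝ) - 2) * (1 + wm) * lV ^ 2 = 0) :
    fderiv ℝ (G D wm lV lW f1 f2)
        ((A / lV) * Real.sqrt (((D : ℝ) - 1) / ((D : ℝ) - 2)),
         (1 / lV) * Real.sqrt (((D : ℝ) - 1) * (2 - A) * A / (2 * ((D : ℝ) - 2))),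
         0) (0, 0, 1) =
      ((1 - lW / lV) * A) • ((0, 0, 1) : ℝ × ℝ × ℝ) := by
  have hD1 : (0:ℝ) < (D : ℝ) - 1 := by
    have : (4:ℝ) ≤ (D:ℝ) := by exact_mod_cast hD
    linarith
  have hD2 : (0:ℝ) < (D : ℝ) - 2 := by
    have : (4:ℝ) ≤ (D:ℝ) := by exact_mod_cast hD
    linarith
  set k : ℝ := Real.sqrt (((D : ℝ) - 2) / ((D : ℝ) - 1)) with hk
  set s : ℝ := Real.sqrt (((D : ℝ) - 1) / ((D : ℝ) - 2)) with hs
  set x : ℝ := (A / lV) * s with hxdef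
  set y : ℝ := (1 / lV) * Real.sqrt (((D : ℝ) - 1) * (2 - A) * A / (2 * ((D : ℝ) - 2)))
    with hydef
  -- key algebraic facts
  have hks : k * s = 1 := by
    rw [hk, hs, ← Real.sqrt_mul (by positivity)]
    rw [show ((D : ℝ) - 2) / ((D : ℝ) - 1) * (((D : ℝ) - 1) / ((D : ℝ) - 2)) = 1 by
      field_simp]
    exact Real.sqrt_one
  have hs2 : s ^ 2 = ((D : ℝ) - 1) / ((D : ℝ) - 2) := Real.sq_sqrt (by positivity)
  have hy2 : y ^ 2 = (1 / lV) ^ 2 * (((D : ℝ) - 1) * (2 - A) * A / (2 * ((D : ℝ) - 2))) := by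
    rw [hydef, mul_pow, Real.sq_sqrt]
    have h2A : (0:ℝ) ≤ 2 - A := by linarith
    positivity
  have hkx : k * x = A / lV := by
    rw [hxdef, show k * (A / lV * s) = A / lV * (k * s) by ring, hks, mul_one]
  -- the eigenvalue
  set μ : ℝ := (1 + wm) + (1 - wm) * x ^ 2 - (1 + wm) * y ^ 2 - k * lW * x with hμ
  have hdiff : DifferentiableAt ℝ (G D wm lV lW f1 f2) (x, y, 0) := by
    unfold G; fun_prop
  -- derivative of the curve t ↦ G (x, y, t) at 0, computed by hand
  have h1 : HasDerivAt (fun t : ℝ =>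
      (1 - wm) * x ^ 3 - (1 + wm) * x * y ^ 2 - (f2 + wm * f1) * x * t ^ 2
        - (1 - wm) * x + 2 * k * (lV * y ^ 2 + lW * f1 * t ^ 2)) 0 0 := by
    have h := hasDerivAt_cubic
      ((1 - wm) * x ^ 3 - (1 + wm) * x * y ^ 2 - (1 - wm) * x + 2 * k * lV * y ^ 2) 0
      (-(f2 + wm * f1) * x + 2 * k * lW * f1) 0
    convert h using 2 with t
    ring
  have h2 : HasDerivAt (fun t : ℝ =>
      (1 + wm) * y + (1 - wm) * x ^ 2 * y - (1 + wm) * y ^ 3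
        - (f2 + wm * f1) * y * t ^ 2 - k * lV * x * y) 0 0 := by
    have h := hasDerivAt_cubic
      ((1 + wm) * y + (1 - wm) * x ^ 2 * y - (1 + wm) * y ^ 3 - k * lV * x * y) 0
      (-(f2 + wm * f1) * y) 0
    convert h using 2 with t
    ring
  have h3 : HasDerivAt (fun t : ℝ =>
      (1 + wm) * t + (1 - wm) * x ^ 2 * t - (1 + wm) * y ^ 2 * t
        - (f2 + wm * f1) * t ^ 3 - k * lW * x * t) μ 0 := by
    have h := hasDerivAt_cubic 0 μ 0 (-(f2 + wm * f1))
    convert h using 2 with t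
    rw [hμ]; ring
  have hcurve : HasDerivAt (fun t : ℝ => G D wm lV lW f1 f2 (x, y, t))
      ((0 : ℝ), (0 : ℝ), μ) 0 := h1.prodMk (h2.prodMk h3)
  -- derivative of the curve via chain rule
  have hι : HasDerivAt (fun t : ℝ => ((x, y, t) : ℝ × ℝ × ℝ)) ((0:ℝ), (0:ℝ), (1:ℝ)) 0 :=
    (hasDerivAt_const (0:ℝ) x).prodMk ((hasDerivAt_const (0:ℝ) y).prodMk (hasDerivAt_id 0))
  have hchain : HasDerivAt (fun t : ℝ => G D wm lV lW f1 f2 (x, y, t))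
      (fderiv ℝ (G D wm lV lW f1 f2) (x, y, 0) (0, 0, 1)) 0 :=
    hdiff.hasFDerivAt.comp_hasDerivAt (f := fun t : ℝ => ((x, y, t) : ℝ × ℝ × ℝ)) 0 hι
  have heq : fderiv ℝ (G D wm lV lW f1 f2) (x, y, 0) (0, 0, 1) = ((0:ℝ), (0:ℝ), μ) :=
    hchain.unique hcurve
  rw [heq, Prod.smul_def, Prod.smul_def, smul_zero, smul_eq_mul, mul_one]
  refine Prod.ext rfl (Prod.ext rfl ?_)
  -- now show μ = (1 - lW/lV) * A
  show μ = (1 - lW / lV) * A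
  have hlV0 : lV ≠ 0 := ne_of_gt hlV
  have hx2 : x ^ 2 = (A / lV) ^ 2 * (((D : ℝ) - 1) / ((D : ℝ) - 2)) := by
    rw [hxdef, mul_pow, hs2]
  have hklWx : k * lW * x = lW * (A / lV) := by
    rw [show k * lW * x = lW * (k * x) by ring, hkx]
  rw [hμ, hx2, hy2, hklWx]
  field_simp
  linear_combination hquad
end

section
/- (Eigenvalue μ₁ at CP₈.) Assume λ_W > 0, f₁ = f₂ > 0, and let B be a real number with 0 ≤ B ≤ 2 satisfying (D−1)(3−w_m)B² − 2[(D−1)(1+w_m) + (D−2)λ_W²]B + 2(D−2)(1+w_m)λ_W² = 0. Let p = (x_c, 0, z_c) with x_c = (B/λ_W)·√((D−1)/(D−2)) and z_c = (1/λ_W)·√((D−1)(2−B)B/(2(D−2)f₁)). Then the standard basis vector e₂ = (0,1,0) is an eigenvector of the total derivative of G at p with eigenvalue (1 − λ_V/λ_W)·B; that is, DG(p)(e₂) = (1 − λ_V/λ_W)·B · e₂. -/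
lemma auxA (A C : ℝ) : HasDerivAt (fun t : ℝ => A + C * t ^ 2) 0 0 := by
  simpa using ((hasDerivAt_pow 2 (0:ℝ)).const_mul C).const_add A

lemma auxB (m c : ℝ) : HasDerivAt (fun t : ℝ => m * t - c * t ^ 3) m 0 := by
  simpa using ((hasDerivAt_id (0:ℝ)).const_mul m).fun_sub ((hasDerivAt_pow 3 (0:ℝ)).const_mul c)

/-- at CP₈, the vector `e₂ = (0,1,0)` is an eigenvector of the total
derivative of `G` with eigenvalue `(1 − λ_V/λ_W) B`. -/
theorem eigenvalue_mu1_CP8 (D : ℕ) (hD : 4 ≤ D) (wm lV lW f1 f2 : ℝ)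
    (hlW : 0 < lW) (hf : f1 = f2) (hf1 : 0 < f1)
    (B : ℝ) (hB0 : 0 ≤ B) (hB2 : B ≤ 2)
    (hquad : ((D : ℝ) - 1) * (3 - wm) * B ^ 2
        - 2 * (((D : ℝ) - 1) * (1 + wm) + ((D : ℝ) - 2) * lW ^ 2) * B
        + 2 * ((D : ℝ) - 2) * (1 + wm) * lW ^ 2 = 0) :
    fderiv ℝ (G D wm lV lW f1 f2)
        ((B / lW) * Real.sqrt (((D : ℝ) - 1) / ((D : ℝ) - 2)),
         0,
         (1 / lW) * Real.sqrt (((D : ℝ) - 1) * (2 - B) * B / (2 * ((D : ℝ) - 2) * f1)))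
        (0, 1, 0) =
      ((1 - lV / lW) * B) • ((0, 1, 0) : ℝ × ℝ × ℝ) := by
  have hD4 : (4:ℝ) ≤ (D:ℝ) := by exact_mod_cast hD
  have hD1 : (0:ℝ) < (D:ℝ) - 1 := by linarith
  have hD2 : (0:ℝ) < (D:ℝ) - 2 := by linarith
  set k := Real.sqrt (((D : ℝ) - 2) / ((D : ℝ) - 1)) with hk
  set xc := (B / lW) * Real.sqrt (((D : ℝ) - 1) / ((D : ℝ) - 2)) with hxc
  set zc := (1 / lW) * Real.sqrt (((D : ℝ) - 1) * (2 - B) * B / (2 * ((D : ℝ) - 2) * f1)) with hzc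
  set μ := (1 + wm) + (1 - wm) * xc ^ 2 - (f2 + wm * f1) * zc ^ 2 - k * lV * xc with hμ
  have hdiff : DifferentiableAt ℝ (G D wm lV lW f1 f2) (xc, 0, zc) := by
    unfold G; fun_prop
  have hline : fderiv ℝ (G D wm lV lW f1 f2) (xc, 0, zc) (0, 1, 0)
      = lineDeriv ℝ (G D wm lV lW f1 f2) (xc, 0, zc) (0, 1, 0) :=
    hdiff.lineDeriv_eq_fderiv.symm
  have hcurve : (fun t : ℝ => G D wm lV lW f1 f2 ((xc, 0, zc) + t • ((0:ℝ), (1:ℝ), (0:ℝ))))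
      = fun t : ℝ =>
        (((1 - wm) * xc ^ 3 - (f2 + wm * f1) * xc * zc ^ 2 - (1 - wm) * xc
            + 2 * k * (lW * f1 * zc ^ 2)) + (2 * k * lV - (1 + wm) * xc) * t ^ 2,
         μ * t - (1 + wm) * t ^ 3,
         ((1 + wm) * zc + (1 - wm) * xc ^ 2 * zc - (f2 + wm * f1) * zc ^ 3 - k * lW * xc * zc)
            + (-((1 + wm) * zc)) * t ^ 2) := by
    funext t
    simp only [G, Prod.mk_add_mk, Prod.smul_mk, smul_eq_mul, Prod.mk.injEq, hμ]
    refine ⟨by ring, by ring, by ring⟩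
  have hder : HasDerivAt (fun t : ℝ => G D wm lV lW f1 f2 ((xc, 0, zc) + t • ((0:ℝ), (1:ℝ), (0:ℝ))))
      ((0:ℝ), μ, (0:ℝ)) 0 := by
    rw [hcurve]
    exact (auxA _ _).prodMk ((auxB _ _).prodMk (auxA _ _))
  have hld : lineDeriv ℝ (G D wm lV lW f1 f2) (xc, 0, zc) (0, 1, 0) = ((0:ℝ), μ, (0:ℝ)) := by
    simpa [lineDeriv] using hder.deriv
  -- sqrt facts
  have hs1 : Real.sqrt (((D : ℝ) - 1) / ((D : ℝ) - 2)) ^ 2 = ((D : ℝ) - 1) / ((D : ℝ) - 2) :=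
    Real.sq_sqrt (by positivity)
  have harg : 0 ≤ ((D : ℝ) - 1) * (2 - B) * B / (2 * ((D : ℝ) - 2) * f1) := by
    apply div_nonneg
    · have : 0 ≤ (2 - B) := by linarith
      positivity
    · positivity
  have hs2 : Real.sqrt (((D : ℝ) - 1) * (2 - B) * B / (2 * ((D : ℝ) - 2) * f1)) ^ 2
      = ((D : ℝ) - 1) * (2 - B) * B / (2 * ((D : ℝ) - 2) * f1) := Real.sq_sqrt harg
  have hks : k * Real.sqrt (((D : ℝ) - 1) / ((D : ℝ) - 2)) = 1 := by
    rw [hk, ← Real.sqrt_mul (by positivity)]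
    rw [show (((D : ℝ) - 2) / ((D : ℝ) - 1)) * (((D : ℝ) - 1) / ((D : ℝ) - 2)) = 1 by field_simp]
    exact Real.sqrt_one
  have hkx : k * xc = B / lW := by
    rw [hxc]; rw [mul_comm (B / lW)]; rw [← mul_assoc, hks]; ring
  have hx2 : xc ^ 2 = B ^ 2 / lW ^ 2 * (((D : ℝ) - 1) / ((D : ℝ) - 2)) := by
    rw [hxc, mul_pow, hs1]; ring
  have hz2 : zc ^ 2 = ((D : ℝ) - 1) * (2 - B) * B / (2 * ((D : ℝ) - 2) * f1) / lW ^ 2 := by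
    rw [hzc, mul_pow, hs2]; ring
  have hkey : 2 * ((D:ℝ) - 2) * (1 + wm) * lW ^ 2 + 2 * ((D:ℝ) - 1) * (1 - wm) * B ^ 2
      - ((D:ℝ) - 1) * (1 + wm) * (2 - B) * B = 2 * ((D:ℝ) - 2) * lW ^ 2 * B := by
    linear_combination hquad
  have hmu : μ = (1 - lV / lW) * B := by
    have hz2' : (f2 + wm * f1) * zc ^ 2
        = (1 + wm) * (((D:ℝ) - 1) * (2 - B) * B) / (2 * ((D:ℝ) - 2) * lW ^ 2) := by
      rw [← hf, hz2]; field_simp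
    rw [hμ, hz2', hx2, show k * lV * xc = lV * (k * xc) by ring, hkx]
    field_simp
    linear_combination hkey
  rw [hline, hld, hmu]
  simp [Prod.smul_mk]
end

section
/- (Cosmological parameters at CP₅.) Assume λ_V > 0 and let A be a real number with 0 < A ≤ 2 satisfying (D−1)(3−w_m)A² − 2[(D−1)(1+w_m) + (D−2)λ_V²]A + 2(D−2)(1+w_m)λ_V² = 0. Let x_c = (A/λ_V)·√((D−1)/(D−2)) and y_c = (1/λ_V)·√((D−1)(2−A)A/(2(D−2))). Then at the point (x_c, y_c, 0): the density parameter satisfies Ω_MG = x_c² + y_c² = (D−1)(2+A)A/(2(D−2)λ_V²); the equation-of-state parameter satisfies w_MG = (x_c² − y_c²)/(x_c² + y_c²) = (3A−2)/(A+2); and the deceleration parameter satisfies q = −1 + ((D−1)/2)[(1+w_m) + (1−w_m)x_c² − (1+w_m)y_c²] = (D−1)A/2 − 1. -/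
/-- the cosmological parameters at CP₅: the density parameter
`Ω_MG = x_c² + y_c²`, the equation-of-state parameter `w_MG = (x_c² − y_c²)/(x_c² + y_c²)`,
and the deceleration parameter
`q = −1 + ((D−1)/2)[(1+w_m) + (1−w_m)x_c² − (1+w_m)y_c²]`. -/
theorem cosmological_parameters_CP5 (D : ℕ) (hD : 4 ≤ D) (wm lV : ℝ)
    (hlV : 0 < lV) (A : ℝ) (hA0 : 0 < A) (hA2 : A ≤ 2)
    (hquad : ((D : ℝ) - 1) * (3 - wm) * A ^ 2
        - 2 * (((D : ℝ) - 1) * (1 + wm) + ((D : ℝ) - 2) * lV ^ 2) * A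
        + 2 * ((D : ℝ) - 2) * (1 + wm) * lV ^ 2 = 0)
    (xc yc : ℝ)
    (hx : xc = (A / lV) * Real.sqrt (((D : ℝ) - 1) / ((D : ℝ) - 2)))
    (hy : yc = (1 / lV) * Real.sqrt (((D : ℝ) - 1) * (2 - A) * A / (2 * ((D : ℝ) - 2)))) :
    xc ^ 2 + yc ^ 2 = ((D : ℝ) - 1) * (2 + A) * A / (2 * ((D : ℝ) - 2) * lV ^ 2) ∧
    (xc ^ 2 - yc ^ 2) / (xc ^ 2 + yc ^ 2) = (3 * A - 2) / (A + 2) ∧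
    -1 + (((D : ℝ) - 1) / 2) *
        ((1 + wm) + (1 - wm) * xc ^ 2 - (1 + wm) * yc ^ 2) =
      ((D : ℝ) - 1) * A / 2 - 1 := by
  have hD2 : (0:ℝ) < (D:ℝ) - 2 := by
    have : (4:ℝ) ≤ (D:ℝ) := by exact_mod_cast hD
    linarith
  have hD1 : (0:ℝ) < (D:ℝ) - 1 := by linarith
  have hlV' : lV ≠ 0 := ne_of_gt hlV
  have hx2 : xc ^ 2 = A ^ 2 / lV ^ 2 * (((D:ℝ) - 1) / ((D:ℝ) - 2)) := by
    rw [hx, mul_pow, div_pow, Real.sq_sqrt (by positivity)]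
  have hy2 : yc ^ 2 = 1 / lV ^ 2 * (((D:ℝ) - 1) * (2 - A) * A / (2 * ((D:ℝ) - 2))) := by
    rw [hy, mul_pow, div_pow, Real.sq_sqrt (by
      have : (0:ℝ) ≤ 2 - A := by linarith
      positivity), one_pow]
  have hsum : xc ^ 2 + yc ^ 2 = ((D : ℝ) - 1) * (2 + A) * A / (2 * ((D : ℝ) - 2) * lV ^ 2) := by
    rw [hx2, hy2]; field_simp; ring
  refine ⟨hsum, ?_, ?_⟩
  · have hpos : (0:ℝ) < xc ^ 2 + yc ^ 2 := by rw [hsum]; positivity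
    rw [div_eq_div_iff (ne_of_gt hpos) (by linarith), hx2, hy2]
    field_simp
    ring
  · have hE : (1 + wm) + (1 - wm) * xc ^ 2 - (1 + wm) * yc ^ 2 = A := by
      rw [hx2, hy2]
      field_simp
      linear_combination hquad
    rw [hE]; ring
end

section
/- (Cosmological parameters at CP₈.) Assume λ_W > 0, f₁ = f₂ > 0, and let B be a real number with 0 < B ≤ 2 satisfying (D−1)(3−w_m)B² − 2[(D−1)(1+w_m) + (D−2)λ_W²]B + 2(D−2)(1+w_m)λ_W² = 0. Let x_c = (B/λ_W)·√((D−1)/(D−2)) and z_c = (1/λ_W)·√((D−1)(2−B)B/(2(D−2)f₁)). Then at the point (x_c, 0, z_c): the density parameter satisfies Ω_MG = x_c² + f₁ z_c² = (D−1)(2+B)B/(2(D−2)λ_W²); the equation-of-state parameter satisfies w_MG = (x_c² − f₂ z_c²)/(x_c² + f₁ z_c²) = (3B−2)/(B+2); and the deceleration parameter satisfies q = −1 + ((D−1)/2)[(1+w_m) + (1−w_m)x_c² − (f₂ + w_m f₁)z_c²] = (D−1)B/2 − 1. -/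
/-- the cosmological parameters at CP₈: the density parameter
`Ω_MG = x_c² + f₁ z_c²`, the equation-of-state parameter
`w_MG = (x_c² − f₂ z_c²)/(x_c² + f₁ z_c²)`, and the deceleration parameter
`q = −1 + ((D−1)/2)[(1+w_m) + (1−w_m)x_c² − (f₂ + w_m f₁)z_c²]`. -/
theorem cosmological_parameters_CP8 (D : ℕ) (hD : 4 ≤ D) (wm lW f1 f2 : ℝ)
    (hlW : 0 < lW) (hf : f1 = f2) (hf1 : 0 < f1)
    (B : ℝ) (hB0 : 0 < B) (hB2 : B ≤ 2)
    (hquad : ((D : ℝ) - 1) * (3 - wm) * B ^ 2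
        - 2 * (((D : ℝ) - 1) * (1 + wm) + ((D : ℝ) - 2) * lW ^ 2) * B
        + 2 * ((D : ℝ) - 2) * (1 + wm) * lW ^ 2 = 0)
    (xc zc : ℝ)
    (hx : xc = (B / lW) * Real.sqrt (((D : ℝ) - 1) / ((D : ℝ) - 2)))
    (hz : zc = (1 / lW) *
      Real.sqrt (((D : ℝ) - 1) * (2 - B) * B / (2 * ((D : ℝ) - 2) * f1))) :
    xc ^ 2 + f1 * zc ^ 2 = ((D : ℝ) - 1) * (2 + B) * B / (2 * ((D : ℝ) - 2) * lW ^ 2) ∧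
    (xc ^ 2 - f2 * zc ^ 2) / (xc ^ 2 + f1 * zc ^ 2) = (3 * B - 2) / (B + 2) ∧
    -1 + (((D : ℝ) - 1) / 2) *
        ((1 + wm) + (1 - wm) * xc ^ 2 - (f2 + wm * f1) * zc ^ 2) =
      ((D : ℝ) - 1) * B / 2 - 1 := by
  have hd : (4:ℝ) ≤ (D:ℝ) := by exact_mod_cast hD
  have hd2 : (0:ℝ) < (D:ℝ) - 2 := by linarith
  have hd1 : (0:ℝ) < (D:ℝ) - 1 := by linarith
  have hlW' : lW ≠ 0 := ne_of_gt hlW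
  have hx2 : xc ^ 2 = B ^ 2 / lW ^ 2 * (((D:ℝ) - 1) / ((D:ℝ) - 2)) := by
    rw [hx, mul_pow, Real.sq_sqrt (div_nonneg (by linarith) (by linarith))]
    ring
  have hz2 : zc ^ 2 = 1 / lW ^ 2 * (((D:ℝ) - 1) * (2 - B) * B / (2 * ((D:ℝ) - 2) * f1)) := by
    rw [hz, mul_pow, Real.sq_sqrt (by
      apply div_nonneg
      · exact mul_nonneg (mul_nonneg (by linarith) (by linarith)) hB0.le
      · positivity)]
    ring
  have h1 : xc ^ 2 + f1 * zc ^ 2 = ((D:ℝ) - 1) * (2 + B) * B / (2 * ((D:ℝ) - 2) * lW ^ 2) := by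
    rw [hx2, hz2]
    field_simp
    ring
  refine ⟨h1, ?_, ?_⟩
  · rw [h1, hx2, hz2, ← hf]
    have hB2' : B + 2 ≠ 0 := by linarith
    field_simp
    ring
  · have hE : (1 + wm) + (1 - wm) * xc ^ 2 - (f2 + wm * f1) * zc ^ 2 = B := by
      rw [hx2, hz2, ← hf]
      field_simp
      linear_combination hquad
    rw [hE]
    ring
end

section
/- (Cosmological parameters at CP₆.) Assume 0 ≤ λ_V < λ_W and f₁ = f₂ < 0, and let y_c = √(λ_W/(λ_W − λ_V)) and z_c = √(λ_V/(|f₁|(λ_W − λ_V))). Then at the point (0, y_c, z_c): the density parameter satisfies Ω_MG = y_c² + f₁ z_c² = 1; the equation-of-state parameter satisfies w_MG = (−y_c² − f₂ z_c²)/(y_c² + f₁ z_c²) = −1; and the deceleration parameter satisfies q = −1 + ((D−1)/2)[(1+w_m) − (1+w_m)y_c² − (f₂ + w_m f₁)z_c²] = −1. -/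
/-- the cosmological parameters at CP₆: the density parameter
`Ω_MG = y_c² + f₁ z_c² = 1`, the equation-of-state parameter
`w_MG = (−y_c² − f₂ z_c²)/(y_c² + f₁ z_c²) = −1`, and the deceleration parameter
`q = −1 + ((D−1)/2)[(1+w_m) − (1+w_m)y_c² − (f₂ + w_m f₁)z_c²] = −1`. -/
theorem cosmological_parameters_CP6 (D : ℕ) (hD : 4 ≤ D) (wm lV lW f1 f2 : ℝ)
    (hlV : 0 ≤ lV) (hlt : lV < lW) (hf : f1 = f2) (hf1 : f1 < 0)
    (yc zc : ℝ)
    (hy : yc = Real.sqrt (lW / (lW - lV)))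
    (hz : zc = Real.sqrt (lV / (|f1| * (lW - lV)))) :
    yc ^ 2 + f1 * zc ^ 2 = 1 ∧
    (-yc ^ 2 - f2 * zc ^ 2) / (yc ^ 2 + f1 * zc ^ 2) = -1 ∧
    -1 + (((D : ℝ) - 1) / 2) *
        ((1 + wm) - (1 + wm) * yc ^ 2 - (f2 + wm * f1) * zc ^ 2) = -1 := by
  have hsub : 0 < lW - lV := by linarith
  have habs : |f1| = -f1 := abs_of_neg hf1
  have hy2 : yc ^ 2 = lW / (lW - lV) := by
    rw [hy, Real.sq_sqrt]
    have h0 : 0 ≤ lW := le_of_lt (lt_of_le_of_lt hlV hlt)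
    positivity
  have hz2 : zc ^ 2 = lV / (-f1 * (lW - lV)) := by
    rw [hz, habs, Real.sq_sqrt]
    have : 0 < -f1 := by linarith
    positivity
  have hfz : f1 * zc ^ 2 = -(lV / (lW - lV)) := by
    rw [hz2, mul_div_assoc', ← neg_div,
      div_eq_div_iff (ne_of_gt (mul_pos (neg_pos.2 hf1) hsub)) (ne_of_gt hsub)]
    ring
  have h1 : yc ^ 2 + f1 * zc ^ 2 = 1 := by
    rw [hy2, hfz]
    field_simp
    ring
  refine ⟨h1, ?_, ?_⟩
  · rw [← hf]
    have : -yc ^ 2 - f1 * zc ^ 2 = -1 := by linarith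
    rw [this, h1]; norm_num
  · rw [← hf]
    have : (1 + wm) - (1 + wm) * yc ^ 2 - (f1 + wm * f1) * zc ^ 2 = 0 := by
      have : (f1 + wm * f1) * zc ^ 2 = (1 + wm) * (f1 * zc ^ 2) := by ring
      rw [this]
      linear_combination (-(1+wm)) * h1
    rw [this]; ring
end
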